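/- With 𝒢, K, ⋄ and θ as in the context, the set 𝒢 ⊠_θ K = {(g,χ) : g ∈ 𝒢, χ ∈ K_{s(g)}}, with (g,χ) and (h,ν) composable iff s(g) = r(h), product (g,χ)(h,ν) = (gh, θ(g,h)·((h⁻¹)⋄χ)·ν), and inverse (g,χ)⁻¹ = (g⁻¹, θ(g,g⁻¹)⁻¹·(g⋄χ⁻¹)), is a groupoid: the product is associative wherever defined, (g,χ)·(g,χ)⁻¹·(g,χ) = (g,χ) for all (g,χ), the unit space of 𝒢 ⊠_θ K is {(x, 1_{K_x}) : x ∈ X} (which may be identified with X), and under this identification the range and source maps are r(g,χ) = r(g) and s(g,χ) = s(g). -/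

import Mathlib

universe u v w

/-- A groupoid, presented by its set of arrows `H` and its unit space `U`: range and source
maps `r, s : H → U`, a (totalized) partially-defined multiplication which is only meaningful on
composable pairs (`s g = r h`), inversion, and the embedding `unit : U → H` of units. -/
structure RawGroupoid (H : Type u) (U : Type v) where
  r : H → U
  s : H → U
  mul : H → H → H
  inv : H → H
  unit : U → H
  r_unit : ∀ x, r (unit x) = x
  s_unit : ∀ x, s (unit x) = x
  r_mul : ∀ g h, s g = r h → r (mul g h) = r g
  s_mul : ∀ g h, s g = r h → s (mul g h) = s h
  r_inv : ∀ g, r (inv g) = s g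
  s_inv : ∀ g, s (inv g) = r g
  inv_inv : ∀ g, inv (inv g) = g
  mul_assoc : ∀ g h k, s g = r h → s h = r k → mul (mul g h) k = mul g (mul h k)
  unit_mul : ∀ g, mul (unit (r g)) g = g
  mul_unit : ∀ g, mul g (unit (s g)) = g
  inv_mul : ∀ g, mul (inv g) g = unit (s g)
  mul_inv : ∀ g, mul g (inv g) = unit (r g)

/-- A bundle of abelian groups: a surjection `p : K → X` together with a fibrewise abelian
group structure (the multiplication is totalized; it is only meaningful within a fibre). -/
structure AbGroupBundle (K : Type u) (X : Type v) where
  p : K → X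
  p_surj : Function.Surjective p
  e : X → K
  bmul : K → K → K
  binv : K → K
  p_e : ∀ x, p (e x) = x
  p_bmul : ∀ s t, p s = p t → p (bmul s t) = p t
  p_binv : ∀ t, p (binv t) = p t
  bmul_assoc : ∀ s t u, p s = p t → p t = p u → bmul (bmul s t) u = bmul s (bmul t u)
  bmul_comm : ∀ s t, p s = p t → bmul s t = bmul t s
  e_bmul : ∀ t, bmul (e (p t)) t = t
  binv_bmul : ∀ t, bmul (binv t) t = e (p t)

section Box

open scoped Classical

variable {Hm : Type u} {X : Type v} {K : Type w}

/-- The underlying set `𝒢 ⊠_θ K = {(g, χ) : g ∈ 𝒢, χ ∈ K_{s(g)}}`. -/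
def BoxW (Gg : RawGroupoid Hm X) (KB : AbGroupBundle K X) : Type max u w :=
  {q : Hm × K // KB.p q.2 = Gg.s q.1}

/-- The product `(g,χ)(h,ν) = (gh, θ(g,h)·((h⁻¹)⋄χ)·ν)` on `𝒢 ⊠_θ K` (for composable pairs;
junk value otherwise). -/
noncomputable def boxMul (Gg : RawGroupoid Hm X) (KB : AbGroupBundle K X)
    (act : Hm → K → K) (θ : Hm → Hm → K) (a b : BoxW Gg KB) : BoxW Gg KB :=
  if h : Gg.s a.val.1 = Gg.r b.val.1 ∧
      KB.p (KB.bmul (KB.bmul (θ a.val.1 b.val.1) (act (Gg.inv b.val.1) a.val.2)) b.val.2) =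
        Gg.s (Gg.mul a.val.1 b.val.1) then
    ⟨(Gg.mul a.val.1 b.val.1,
      KB.bmul (KB.bmul (θ a.val.1 b.val.1) (act (Gg.inv b.val.1) a.val.2)) b.val.2),
      h.2⟩
  else a

/-- The inverse `(g,χ)⁻¹ = (g⁻¹, θ(g,g⁻¹)⁻¹·(g⋄χ⁻¹))` on `𝒢 ⊠_θ K`. -/
noncomputable def boxInv (Gg : RawGroupoid Hm X) (KB : AbGroupBundle K X)
    (act : Hm → K → K) (θ : Hm → Hm → K) (a : BoxW Gg KB) : BoxW Gg KB :=
  if h : KB.p (KB.bmul (KB.binv (θ a.val.1 (Gg.inv a.val.1))) (act a.val.1 (KB.binv a.val.2))) =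
      Gg.s (Gg.inv a.val.1) then
    ⟨(Gg.inv a.val.1,
      KB.bmul (KB.binv (θ a.val.1 (Gg.inv a.val.1))) (act a.val.1 (KB.binv a.val.2))),
      h⟩
  else a

end Box


section FibAux

variable {X : Type v} {K : Type w}

/-- The fibre `K_x` as a type. -/
abbrev Fib (KB : AbGroupBundle K X) (x : X) : Type w := {t : K // KB.p t = x}

noncomputable instance instFibCommGroup (KB : AbGroupBundle K X) (x : X) :
    CommGroup (Fib KB x) where
  mul a b := ⟨KB.bmul a.1 b.1, by rw [KB.p_bmul _ _ (a.2.trans b.2.symm), b.2]⟩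
  one := ⟨KB.e x, KB.p_e x⟩
  inv a := ⟨KB.binv a.1, (KB.p_binv a.1).trans a.2⟩
  mul_assoc a b c :=
    Subtype.ext (KB.bmul_assoc _ _ _ (a.2.trans b.2.symm) (b.2.trans c.2.symm))
  one_mul a := Subtype.ext (by have := KB.e_bmul a.1; rwa [a.2] at this)
  mul_one a := Subtype.ext (by
    have h := KB.bmul_comm a.1 (KB.e x) (a.2.trans (KB.p_e x).symm)
    have h2 := KB.e_bmul a.1
    rw [a.2] at h2
    exact h.trans h2)
  inv_mul_cancel a := Subtype.ext (by
    have := KB.binv_bmul a.1; rwa [a.2] at this)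
  mul_comm a b := Subtype.ext (KB.bmul_comm _ _ (a.2.trans b.2.symm))

lemma k_assoc_key (KB : AbGroupBundle K X) (x : X) (P Q R S T U V : K)
    (hP : KB.p P = x) (hQ : KB.p Q = x) (hR : KB.p R = x) (hS : KB.p S = x)
    (hT : KB.p T = x) (hU : KB.p U = x) (hV : KB.p V = x)
    (h : KB.bmul Q P = KB.bmul U V) :
    KB.bmul (KB.bmul P (KB.bmul (KB.bmul Q R) S)) T =
      KB.bmul (KB.bmul U R) (KB.bmul (KB.bmul V S) T) := by
  let P' : Fib KB x := ⟨P, hP⟩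
  let Q' : Fib KB x := ⟨Q, hQ⟩
  let R' : Fib KB x := ⟨R, hR⟩
  let S' : Fib KB x := ⟨S, hS⟩
  let T' : Fib KB x := ⟨T, hT⟩
  let U' : Fib KB x := ⟨U, hU⟩
  let V' : Fib KB x := ⟨V, hV⟩
  have key : (P' * (Q' * R' * S')) * T' = (U' * R') * ((V' * S') * T') := by
    have h2 : (P' * (Q' * R' * S')) * T' = (Q' * P') * (R' * (S' * T')) := by
      simp only [mul_assoc, mul_comm, mul_left_comm]
    have h3 : (U' * R') * ((V' * S') * T') = (U' * V') * (R' * (S' * T')) := by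
      simp only [mul_assoc, mul_comm, mul_left_comm]
    rw [h2, h3, show Q' * P' = U' * V' from Subtype.ext h]
  exact congrArg Subtype.val key

lemma k_mulinv (KB : AbGroupBundle K X) (x : X) (D E F : K)
    (hD : KB.p D = x) (hE : KB.p E = x) (hF : KB.p F = x)
    (h : KB.bmul E F = KB.e x) :
    KB.bmul (KB.bmul D E) (KB.bmul (KB.binv D) F) = KB.e x := by
  let D' : Fib KB x := ⟨D, hD⟩
  let E' : Fib KB x := ⟨E, hE⟩
  let F' : Fib KB x := ⟨F, hF⟩
  have key : (D' * E') * (D'⁻¹ * F') = 1 := by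
    have h4 : (D' * E') * (D'⁻¹ * F') = (D' * D'⁻¹) * (E' * F') := by
      simp only [mul_assoc, mul_comm, mul_left_comm]
    rw [h4, show E' * F' = 1 from Subtype.ext h, mul_inv_cancel, one_mul]
  exact congrArg Subtype.val key

lemma k_invmul (KB : AbGroupBundle K X) (x : X) (W c : K)
    (hW : KB.p W = x) (hc : KB.p c = x) :
    KB.bmul (KB.bmul W (KB.bmul (KB.binv W) (KB.binv c))) c = KB.e x := by
  let W' : Fib KB x := ⟨W, hW⟩
  let c' : Fib KB x := ⟨c, hc⟩
  have key : (W' * (W'⁻¹ * c'⁻¹)) * c' = 1 := by group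
  exact congrArg Subtype.val key

lemma k_self_sq (KB : AbGroupBundle K X) (x : X) (A : K) (hA : KB.p A = x)
    (h : A = KB.bmul A A) : A = KB.e x := by
  have key : (⟨A, hA⟩ : Fib KB x) = 1 :=
    right_eq_mul.mp (Subtype.ext h : (⟨A, hA⟩ : Fib KB x) = ⟨A, hA⟩ * ⟨A, hA⟩)
  exact congrArg Subtype.val key

lemma k_cancel (KB : AbGroupBundle K X) (x : X) (A : K) (hA : KB.p A = x)
    (h : KB.bmul A A = KB.bmul A (KB.e x)) : A = KB.e x := by
  have key : (⟨A, hA⟩ : Fib KB x) = 1 :=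
    mul_left_cancel (a := (⟨A, hA⟩ : Fib KB x))
      (Subtype.ext h : (⟨A, hA⟩ : Fib KB x) * ⟨A, hA⟩ = ⟨A, hA⟩ * 1)
  exact congrArg Subtype.val key

lemma k_eq_of (KB : AbGroupBundle K X) (x : X) (Q P : K)
    (hQ : KB.p Q = x) (hP : KB.p P = x)
    (h : KB.bmul Q (KB.e x) = KB.bmul (KB.e x) P) : Q = P := by
  have key : (⟨Q, hQ⟩ : Fib KB x) = ⟨P, hP⟩ := by
    have := (Subtype.ext h : (⟨Q, hQ⟩ : Fib KB x) * 1 = 1 * ⟨P, hP⟩)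
    simpa using this
  exact congrArg Subtype.val key

lemma k_inv_eq (KB : AbGroupBundle K X) (x : X) (A B : K)
    (hA : KB.p A = x) (hB : KB.p B = x)
    (h : KB.bmul A B = KB.e x) : B = KB.binv A := by
  have key : (⟨B, hB⟩ : Fib KB x) = (⟨A, hA⟩ : Fib KB x)⁻¹ :=
    (inv_eq_of_mul_eq_one_right (Subtype.ext h : (⟨A, hA⟩ : Fib KB x) * ⟨B, hB⟩ = 1)).symm
  exact congrArg Subtype.val key

end FibAux

/-- Proposition 5.9 (algebraic part): given a groupoid `𝒢` with unit space `X`, a bundle `K` of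
abelian groups over `X`, an action `⋄` of `𝒢` on `K` by group isomorphisms, and `θ` assigning to
each composable pair `(g,h)` an element `θ(g,h) ∈ K_{s(h)}` with `θ(r(g),g) = 1` and satisfying
the cocycle-type identity, the set `𝒢 ⊠_θ K` with the product
`(g,χ)(h,ν) = (gh, θ(g,h)·((h⁻¹)⋄χ)·ν)` and inverse `(g,χ)⁻¹ = (g⁻¹, θ(g,g⁻¹)⁻¹·(g⋄χ⁻¹))` is a
groupoid: the product is associative wherever defined, `(g,χ)(g,χ)⁻¹(g,χ) = (g,χ)`, the unit
space is `{(x, 1_{K_x}) : x ∈ X}` (identified with `X`), and under this identification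
`r(g,χ) = r(g)` and `s(g,χ) = s(g)`. -/
theorem prop59 {Hm : Type u} {X : Type v} {K : Type w}
    (Gg : RawGroupoid Hm X) (KB : AbGroupBundle K X)
    (act : Hm → K → K)
    -- `g ⋄ (−)` maps `K_{s(g)}` to `K_{r(g)}` …
    (hact_fib : ∀ g χ, KB.p χ = Gg.s g → KB.p (act g χ) = Gg.r g)
    -- … multiplicatively …
    (hact_mul : ∀ g χ χ', KB.p χ = Gg.s g → KB.p χ' = Gg.s g →
      act g (KB.bmul χ χ') = KB.bmul (act g χ) (act g χ'))
    -- … and bijectively (a group isomorphism `K_{s(g)} ≃ K_{r(g)}`)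
    (hact_inj : ∀ g χ χ', KB.p χ = Gg.s g → KB.p χ' = Gg.s g → act g χ = act g χ' → χ = χ')
    (hact_surj : ∀ g ν, KB.p ν = Gg.r g → ∃ χ, KB.p χ = Gg.s g ∧ act g χ = ν)
    -- `⋄` is an action
    (hact_comp : ∀ g h χ, Gg.s g = Gg.r h → KB.p χ = Gg.s h →
      act (Gg.mul g h) χ = act g (act h χ))
    (hact_unit : ∀ (x : X) χ, KB.p χ = x → act (Gg.unit x) χ = χ)
    (θ : Hm → Hm → K)
    -- `θ(g,h) ∈ K_{s(h)}` for composable `(g,h)`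
    (hθ_fib : ∀ g h, Gg.s g = Gg.r h → KB.p (θ g h) = Gg.s h)
    -- `θ(r(g),g) = 1_{K_{s(g)}}`
    (hθ_unit : ∀ g, θ (Gg.unit (Gg.r g)) g = KB.e (Gg.s g))
    -- the cocycle-type identity `((k⁻¹)⋄θ(g,h))·θ(gh,k) = θ(g,hk)·θ(h,k)`
    (hθ_cocycle : ∀ g h k, Gg.s g = Gg.r h → Gg.s h = Gg.r k →
      KB.bmul (act (Gg.inv k) (θ g h)) (θ (Gg.mul g h) k) =
        KB.bmul (θ g (Gg.mul h k)) (θ h k)) :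
    -- associativity wherever defined
    (∀ a b c : BoxW Gg KB, Gg.s a.val.1 = Gg.r b.val.1 → Gg.s b.val.1 = Gg.r c.val.1 →
        boxMul Gg KB act θ (boxMul Gg KB act θ a b) c =
          boxMul Gg KB act θ a (boxMul Gg KB act θ b c)) ∧
    -- `(g,χ)·(g,χ)⁻¹·(g,χ) = (g,χ)`
    (∀ a : BoxW Gg KB,
        boxMul Gg KB act θ (boxMul Gg KB act θ a (boxInv Gg KB act θ a)) a = a) ∧
    -- the unit space of `𝒢 ⊠_θ K` is `{(x, 1_{K_x}) : x ∈ X}`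
    ({w : BoxW Gg KB | ∃ a : BoxW Gg KB, w = boxMul Gg KB act θ a (boxInv Gg KB act θ a)} =
      {w : BoxW Gg KB | ∃ x : X, w.val.1 = Gg.unit x ∧ w.val.2 = KB.e x}) ∧
    -- range and source: `r(g,χ) = r(g)` and `s(g,χ) = s(g)`
    (∀ a : BoxW Gg KB,
        (boxMul Gg KB act θ a (boxInv Gg KB act θ a)).val =
          (Gg.unit (Gg.r a.val.1), KB.e (Gg.r a.val.1)) ∧
        (boxMul Gg KB act θ (boxInv Gg KB act θ a) a).val =
          (Gg.unit (Gg.s a.val.1), KB.e (Gg.s a.val.1))) := by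
  classical
  -- groupoid helpers
  have inv_uniq : ∀ g a : Hm, Gg.s g = Gg.r a → Gg.mul g a = Gg.unit (Gg.r g) → a = Gg.inv g := by
    intro g a hsa hm
    calc a = Gg.mul (Gg.unit (Gg.r a)) a := (Gg.unit_mul a).symm
      _ = Gg.mul (Gg.unit (Gg.s g)) a := by rw [hsa]
      _ = Gg.mul (Gg.mul (Gg.inv g) g) a := by rw [Gg.inv_mul]
      _ = Gg.mul (Gg.inv g) (Gg.mul g a) := Gg.mul_assoc _ _ _ (Gg.s_inv g) hsa
      _ = Gg.mul (Gg.inv g) (Gg.unit (Gg.s (Gg.inv g))) := by rw [hm, Gg.s_inv]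
      _ = Gg.inv g := Gg.mul_unit _
  have inv_unit : ∀ x : X, Gg.inv (Gg.unit x) = Gg.unit x := by
    intro x
    have h1 := Gg.mul_inv (Gg.unit x)
    rw [Gg.r_unit] at h1
    have h2 := Gg.unit_mul (Gg.inv (Gg.unit x))
    rw [Gg.r_inv, Gg.s_unit] at h2
    rw [← h2, h1]
  have inv_mul_rev : ∀ h k : Hm, Gg.s h = Gg.r k →
      Gg.inv (Gg.mul h k) = Gg.mul (Gg.inv k) (Gg.inv h) := by
    intro h k hc
    have hc1 : Gg.s (Gg.inv k) = Gg.r (Gg.inv h) := by rw [Gg.s_inv, Gg.r_inv, hc]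
    have hra : Gg.s (Gg.mul h k) = Gg.r (Gg.mul (Gg.inv k) (Gg.inv h)) := by
      rw [Gg.s_mul _ _ hc, Gg.r_mul _ _ hc1, Gg.r_inv]
    have e2 : Gg.mul (Gg.mul h k) (Gg.inv k) = h := by
      rw [Gg.mul_assoc h k (Gg.inv k) hc (Gg.r_inv k).symm, Gg.mul_inv k, ← hc, Gg.mul_unit]
    have hmul : Gg.mul (Gg.mul h k) (Gg.mul (Gg.inv k) (Gg.inv h)) =
        Gg.unit (Gg.r (Gg.mul h k)) := by
      rw [← Gg.mul_assoc _ _ _ (by rw [Gg.s_mul _ _ hc, Gg.r_inv]) hc1, e2, Gg.mul_inv,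
        Gg.r_mul _ _ hc]
    exact (inv_uniq _ _ hra hmul).symm
  -- action helpers
  have act_e : ∀ g : Hm, act g (KB.e (Gg.s g)) = KB.e (Gg.r g) := by
    intro g
    have hpe : KB.p (KB.e (Gg.s g)) = Gg.s g := KB.p_e _
    have hee : KB.bmul (KB.e (Gg.s g)) (KB.e (Gg.s g)) = KB.e (Gg.s g) := by
      have h := KB.e_bmul (KB.e (Gg.s g)); rwa [hpe] at h
    have h2 := hact_mul g _ _ hpe hpe
    rw [hee] at h2
    exact k_self_sq KB (Gg.r g) _ (hact_fib g _ hpe) h2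
  have act_binv : ∀ (g : Hm) (χ : K), KB.p χ = Gg.s g →
      act g (KB.binv χ) = KB.binv (act g χ) := by
    intro g χ hχ
    have h1 : KB.bmul (act g χ) (act g (KB.binv χ)) = KB.e (Gg.r g) := by
      rw [← hact_mul g χ (KB.binv χ) hχ (by rw [KB.p_binv, hχ])]
      have h2 : KB.bmul χ (KB.binv χ) = KB.e (Gg.s g) := by
        rw [KB.bmul_comm χ (KB.binv χ) (KB.p_binv χ).symm]
        have h3 := KB.binv_bmul χ; rwa [hχ] at h3
      rw [h2, act_e]
    exact k_inv_eq KB (Gg.r g) _ _ (hact_fib g χ hχ)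
      (hact_fib g _ (by rw [KB.p_binv, hχ])) h1
  -- θ helpers
  have θ_u : ∀ g : Hm, θ g (Gg.unit (Gg.s g)) = KB.e (Gg.s g) := by
    intro g
    have h1 : Gg.s g = Gg.r (Gg.unit (Gg.s g)) := (Gg.r_unit _).symm
    have h2 : Gg.s (Gg.unit (Gg.s g)) = Gg.r (Gg.unit (Gg.s g)) := by
      rw [Gg.s_unit, Gg.r_unit]
    have hc := hθ_cocycle g (Gg.unit (Gg.s g)) (Gg.unit (Gg.s g)) h1 h2
    have hpθ : KB.p (θ g (Gg.unit (Gg.s g))) = Gg.s g := by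
      rw [hθ_fib g _ h1, Gg.s_unit]
    have hmuu : Gg.mul (Gg.unit (Gg.s g)) (Gg.unit (Gg.s g)) = Gg.unit (Gg.s g) := by
      have h3 := Gg.mul_unit (Gg.unit (Gg.s g))
      rwa [Gg.s_unit] at h3
    have hθuu : θ (Gg.unit (Gg.s g)) (Gg.unit (Gg.s g)) = KB.e (Gg.s g) := by
      have h4 := hθ_unit (Gg.unit (Gg.s g))
      rwa [Gg.r_unit, Gg.s_unit] at h4
    rw [inv_unit, Gg.mul_unit, hmuu, hθuu, hact_unit (Gg.s g) _ hpθ] at hc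
    exact k_cancel KB (Gg.s g) _ hpθ hc
  have θ_invf : ∀ g : Hm, θ (Gg.inv g) g = act (Gg.inv g) (θ g (Gg.inv g)) := by
    intro g
    have h1 : Gg.s g = Gg.r (Gg.inv g) := (Gg.r_inv g).symm
    have hc := hθ_cocycle g (Gg.inv g) g h1 (Gg.s_inv g)
    rw [Gg.mul_inv, Gg.inv_mul, hθ_unit g, θ_u g] at hc
    exact (k_eq_of KB (Gg.s g) _ _
      ((hact_fib (Gg.inv g) _ (hθ_fib g (Gg.inv g) h1)).trans (Gg.r_inv g))
      (hθ_fib (Gg.inv g) g (Gg.s_inv g)) hc).symm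
  -- unfolding lemmas
  have fib_cond : ∀ (g h : Hm) (χ ν : K), Gg.s g = Gg.r h → KB.p χ = Gg.s g →
      KB.p ν = Gg.s h →
      KB.p (KB.bmul (KB.bmul (θ g h) (act (Gg.inv h) χ)) ν) = Gg.s (Gg.mul g h) := by
    intro g h χ ν hc hχ hν
    have h1 : KB.p (θ g h) = Gg.s h := hθ_fib g h hc
    have h2 : KB.p (act (Gg.inv h) χ) = Gg.s h := by
      rw [← Gg.r_inv h]
      exact hact_fib _ _ (by rw [Gg.s_inv, ← hc, hχ])
    have h3 : KB.p (KB.bmul (θ g h) (act (Gg.inv h) χ)) = Gg.s h := by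
      rw [KB.p_bmul _ _ (h1.trans h2.symm), h2]
    rw [KB.p_bmul _ _ (h3.trans hν.symm), hν, Gg.s_mul _ _ hc]
  have boxMul_eq : ∀ (a b : BoxW Gg KB) (hc : Gg.s a.val.1 = Gg.r b.val.1),
      boxMul Gg KB act θ a b =
        ⟨(Gg.mul a.val.1 b.val.1,
          KB.bmul (KB.bmul (θ a.val.1 b.val.1) (act (Gg.inv b.val.1) a.val.2)) b.val.2),
          fib_cond _ _ _ _ hc a.2 b.2⟩ := by
    intro a b hc
    unfold boxMul
    exact dif_pos ⟨hc, fib_cond _ _ _ _ hc a.2 b.2⟩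
  have inv_cond : ∀ a : BoxW Gg KB,
      KB.p (KB.bmul (KB.binv (θ a.val.1 (Gg.inv a.val.1))) (act a.val.1 (KB.binv a.val.2))) =
        Gg.s (Gg.inv a.val.1) := by
    intro a
    have h1 : KB.p (KB.binv (θ a.val.1 (Gg.inv a.val.1))) = Gg.r a.val.1 := by
      rw [KB.p_binv, hθ_fib _ _ (Gg.r_inv _).symm, Gg.s_inv]
    have h2 : KB.p (act a.val.1 (KB.binv a.val.2)) = Gg.r a.val.1 :=
      hact_fib _ _ (by rw [KB.p_binv, a.2])
    rw [KB.p_bmul _ _ (h1.trans h2.symm), h2, Gg.s_inv]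
  have boxInv_eq : ∀ a : BoxW Gg KB,
      boxInv Gg KB act θ a =
        ⟨(Gg.inv a.val.1,
          KB.bmul (KB.binv (θ a.val.1 (Gg.inv a.val.1))) (act a.val.1 (KB.binv a.val.2))),
          inv_cond a⟩ := by
    intro a
    unfold boxInv
    exact dif_pos (inv_cond a)
  -- range identity
  have claim4r : ∀ a : BoxW Gg KB,
      (boxMul Gg KB act θ a (boxInv Gg KB act θ a)).val =
        (Gg.unit (Gg.r a.val.1), KB.e (Gg.r a.val.1)) := by
    intro a
    rw [boxInv_eq a, boxMul_eq a
      ⟨(Gg.inv a.val.1,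
        KB.bmul (KB.binv (θ a.val.1 (Gg.inv a.val.1))) (act a.val.1 (KB.binv a.val.2))),
        inv_cond a⟩ ((Gg.r_inv a.val.1).symm)]
    dsimp only
    rw [Gg.mul_inv, Gg.inv_inv]
    have hEF : KB.bmul (act a.val.1 a.val.2) (act a.val.1 (KB.binv a.val.2)) =
        KB.e (Gg.r a.val.1) := by
      rw [← hact_mul _ _ _ a.2 (by rw [KB.p_binv, a.2])]
      have hx : KB.bmul a.val.2 (KB.binv a.val.2) = KB.e (Gg.s a.val.1) := by
        rw [KB.bmul_comm _ _ (KB.p_binv a.val.2).symm]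
        have h5 := KB.binv_bmul a.val.2; rwa [a.2] at h5
      rw [hx, act_e]
    rw [k_mulinv KB (Gg.r a.val.1) _ _ _
      ((hθ_fib _ _ (Gg.r_inv _).symm).trans (Gg.s_inv _))
      (hact_fib _ _ a.2) (hact_fib _ _ (by rw [KB.p_binv, a.2])) hEF]
  -- source identity
  have claim4s : ∀ a : BoxW Gg KB,
      (boxMul Gg KB act θ (boxInv Gg KB act θ a) a).val =
        (Gg.unit (Gg.s a.val.1), KB.e (Gg.s a.val.1)) := by
    intro a
    rw [boxInv_eq a, boxMul_eq
      ⟨(Gg.inv a.val.1,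
        KB.bmul (KB.binv (θ a.val.1 (Gg.inv a.val.1))) (act a.val.1 (KB.binv a.val.2))),
        inv_cond a⟩ a (Gg.s_inv a.val.1)]
    dsimp only
    rw [Gg.inv_mul]
    have hpD : KB.p (KB.binv (θ a.val.1 (Gg.inv a.val.1))) = Gg.s (Gg.inv a.val.1) := by
      rw [KB.p_binv]; exact hθ_fib _ _ (Gg.r_inv _).symm
    have hpF : KB.p (act a.val.1 (KB.binv a.val.2)) = Gg.s (Gg.inv a.val.1) := by
      rw [Gg.s_inv]; exact hact_fib _ _ (by rw [KB.p_binv, a.2])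
    have hm1 : act (Gg.inv a.val.1)
        (KB.bmul (KB.binv (θ a.val.1 (Gg.inv a.val.1))) (act a.val.1 (KB.binv a.val.2))) =
        KB.bmul (KB.binv (θ (Gg.inv a.val.1) a.val.1)) (KB.binv a.val.2) := by
      rw [hact_mul _ _ _ hpD hpF]
      congr 1
      · rw [act_binv (Gg.inv a.val.1) _ (hθ_fib _ _ (Gg.r_inv _).symm), ← θ_invf]
      · rw [← hact_comp (Gg.inv a.val.1) a.val.1 (KB.binv a.val.2) (Gg.s_inv _)
          (by rw [KB.p_binv, a.2]), Gg.inv_mul, hact_unit _ _ (by rw [KB.p_binv, a.2])]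
    rw [hm1, k_invmul KB (Gg.s a.val.1) _ _ (hθ_fib _ _ (Gg.s_inv _)) a.2]
  -- (g,χ)(g,χ)⁻¹(g,χ) = (g,χ)
  have claim2 : ∀ a : BoxW Gg KB,
      boxMul Gg KB act θ (boxMul Gg KB act θ a (boxInv Gg KB act θ a)) a = a := by
    intro a
    have hb : KB.p (KB.e (Gg.r a.val.1)) = Gg.s (Gg.unit (Gg.r a.val.1)) := by
      rw [KB.p_e, Gg.s_unit]
    have h41 : boxMul Gg KB act θ a (boxInv Gg KB act θ a) =
        ⟨(Gg.unit (Gg.r a.val.1), KB.e (Gg.r a.val.1)), hb⟩ :=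
      Subtype.ext (claim4r a)
    rw [h41, boxMul_eq ⟨(Gg.unit (Gg.r a.val.1), KB.e (Gg.r a.val.1)), hb⟩ a (Gg.s_unit _)]
    apply Subtype.ext
    dsimp only
    have hone : act (Gg.inv a.val.1) (KB.e (Gg.r a.val.1)) = KB.e (Gg.s a.val.1) := by
      have h6 := act_e (Gg.inv a.val.1)
      rwa [Gg.s_inv, Gg.r_inv] at h6
    have hee : KB.bmul (KB.e (Gg.s a.val.1)) (KB.e (Gg.s a.val.1)) = KB.e (Gg.s a.val.1) := by
      have h7 := KB.e_bmul (KB.e (Gg.s a.val.1)); rwa [KB.p_e] at h7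
    have heχ : KB.bmul (KB.e (Gg.s a.val.1)) a.val.2 = a.val.2 := by
      have h8 := KB.e_bmul a.val.2; rwa [a.2] at h8
    rw [Gg.unit_mul, hθ_unit a.val.1, hone, hee, heχ]
  -- unit space
  have claim3 :
      ({w : BoxW Gg KB | ∃ a : BoxW Gg KB, w = boxMul Gg KB act θ a (boxInv Gg KB act θ a)} =
        {w : BoxW Gg KB | ∃ x : X, w.val.1 = Gg.unit x ∧ w.val.2 = KB.e x}) := by
    ext w
    simp only [Set.mem_setOf_eq]
    constructor
    · rintro ⟨a, rfl⟩
      exact ⟨Gg.r a.val.1, by rw [claim4r a], by rw [claim4r a]⟩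
    · rintro ⟨x, h1, h2⟩
      refine ⟨w, ?_⟩
      apply Subtype.ext
      rw [claim4r w, h1, Gg.r_unit]
      exact Prod.ext h1 h2
  -- associativity
  have claim1 : ∀ a b c : BoxW Gg KB, Gg.s a.val.1 = Gg.r b.val.1 → Gg.s b.val.1 = Gg.r c.val.1 →
      boxMul Gg KB act θ (boxMul Gg KB act θ a b) c =
        boxMul Gg KB act θ a (boxMul Gg KB act θ b c) := by
    intro a b c hab hbc
    rw [boxMul_eq a b hab, boxMul_eq b c hbc,
      boxMul_eq ⟨(Gg.mul a.val.1 b.val.1,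
        KB.bmul (KB.bmul (θ a.val.1 b.val.1) (act (Gg.inv b.val.1) a.val.2)) b.val.2),
        fib_cond _ _ _ _ hab a.2 b.2⟩ c ((Gg.s_mul _ _ hab).trans hbc),
      boxMul_eq a ⟨(Gg.mul b.val.1 c.val.1,
        KB.bmul (KB.bmul (θ b.val.1 c.val.1) (act (Gg.inv c.val.1) b.val.2)) c.val.2),
        fib_cond _ _ _ _ hbc b.2 c.2⟩ (hab.trans (Gg.r_mul _ _ hbc).symm)]
    apply Subtype.ext
    dsimp only
    have hpA : KB.p (θ a.val.1 b.val.1) = Gg.s (Gg.inv c.val.1) :=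
      (hθ_fib _ _ hab).trans (hbc.trans (Gg.s_inv _).symm)
    have hpB : KB.p (act (Gg.inv b.val.1) a.val.2) = Gg.s (Gg.inv c.val.1) :=
      (hact_fib _ _ (a.2.trans (hab.trans (Gg.s_inv _).symm))).trans
        ((Gg.r_inv _).trans (hbc.trans (Gg.s_inv _).symm))
    have hpν : KB.p b.val.2 = Gg.s (Gg.inv c.val.1) := b.2.trans (hbc.trans (Gg.s_inv _).symm)
    have hdist : act (Gg.inv c.val.1)
        (KB.bmul (KB.bmul (θ a.val.1 b.val.1) (act (Gg.inv b.val.1) a.val.2)) b.val.2) =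
        KB.bmul (KB.bmul (act (Gg.inv c.val.1) (θ a.val.1 b.val.1))
          (act (Gg.inv c.val.1) (act (Gg.inv b.val.1) a.val.2)))
          (act (Gg.inv c.val.1) b.val.2) := by
      rw [hact_mul _ _ _ (by rw [KB.p_bmul _ _ (hpA.trans hpB.symm)]; exact hpB) hpν,
        hact_mul _ _ _ hpA hpB]
    have hR : act (Gg.inv (Gg.mul b.val.1 c.val.1)) a.val.2 =
        act (Gg.inv c.val.1) (act (Gg.inv b.val.1) a.val.2) := by
      rw [inv_mul_rev b.val.1 c.val.1 hbc]
      exact hact_comp _ _ _ (by rw [Gg.s_inv, Gg.r_inv, hbc])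
        (a.2.trans (hab.trans (Gg.s_inv _).symm))
    rw [Gg.mul_assoc _ _ _ hab hbc, hdist, hR]
    rw [k_assoc_key KB (Gg.s c.val.1) _ _ _ _ _ _ _
      (hθ_fib _ _ ((Gg.s_mul _ _ hab).trans hbc))
      ((hact_fib _ _ hpA).trans (Gg.r_inv _))
      ((hact_fib _ _ hpB).trans (Gg.r_inv _))
      ((hact_fib _ _ hpν).trans (Gg.r_inv _))
      c.2
      ((hθ_fib _ _ (hab.trans (Gg.r_mul _ _ hbc).symm)).trans (Gg.s_mul _ _ hbc))
      (hθ_fib _ _ hbc)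
      (hθ_cocycle a.val.1 b.val.1 c.val.1 hab hbc)]
  exact ⟨claim1, claim2, claim3, fun a => ⟨claim4r a, claim4s a⟩⟩
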